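/- Let H be a finite-dimensional real vector space, B : H × H → ℝ a symmetric bilinear form, λ a real number, n ≥ 1, and F a symmetric 2n-multilinear map H^{2n} → ℝ such that F(η, …, η) = λ · B(η,η)^n for every η ∈ H. If η ∈ H satisfies B(η,η) = 0, then for every ξ ∈ H one has F(η, …, η, ξ, …, ξ) (with n copies of η and n copies of ξ) = λ · (2^n (n!)² / (2n)!) · B(η,ξ)^n. In particular, if λ ≠ 0 and B(η,ξ) ≠ 0 then F(η,…,η,ξ,…,ξ) ≠ 0. -/

import Mathlib

lemma exists_perm_mem_iff {α : Type*} [Fintype α] [DecidableEq α] {s t : Finset α}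
    (h : s.card = t.card) : ∃ σ : Equiv.Perm α, ∀ i, σ i ∈ s ↔ i ∈ t := by
  have hc : tᶜ.card = sᶜ.card := by simp [Finset.card_compl, h]
  let e1 : {x // x ∈ t} ≃ {x // x ∈ s} := Finset.equivOfCardEq h.symm
  let e2 : {x // ¬ x ∈ t} ≃ {x // ¬ x ∈ s} :=
    ((Equiv.subtypeEquivRight (fun x => (Finset.mem_compl).symm)).trans
      (Finset.equivOfCardEq hc)).trans
      (Equiv.subtypeEquivRight (fun x => Finset.mem_compl))
  refine ⟨(Equiv.sumCompl (· ∈ t)).symm.trans ((e1.sumCongr e2).trans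
    (Equiv.sumCompl (· ∈ s))), fun i => ?_⟩
  by_cases hi : i ∈ t
  · simp [Equiv.sumCompl_symm_apply_of_pos hi, hi, (e1 ⟨i, hi⟩).2]
  · simp [Equiv.sumCompl_symm_apply_of_neg hi, hi, (e2 ⟨i, hi⟩).2]

/-- Let `H` be a finite-dimensional real vector space, `B` a symmetric
bilinear form, `lam ∈ ℝ`, `n ≥ 1`, and `F` a symmetric `2n`-multilinear form with
`F(η,…,η) = lam * B(η,η)^n`. If `B(η,η) = 0` then
`F(η,…,η,ξ,…,ξ) = lam * (2^n (n!)² / (2n)!) * B(η,ξ)^n` (with `n` copies of `η` and `n`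
copies of `ξ`); in particular if `lam ≠ 0` and `B(η,ξ) ≠ 0` then `F(η,…,η,ξ,…,ξ) ≠ 0`. -/
theorem fujiki_isotropic_power_evaluation
    (H : Type*) [AddCommGroup H] [Module ℝ H] [FiniteDimensional ℝ H]
    (B : H →ₗ[ℝ] H →ₗ[ℝ] ℝ) (hBsymm : ∀ x y : H, B x y = B y x)
    (lam : ℝ) (n : ℕ) (hn : 1 ≤ n)
    (F : MultilinearMap ℝ (fun _ : Fin (2 * n) => H) ℝ)
    (hFsymm : ∀ (v : Fin (2 * n) → H) (σ : Equiv.Perm (Fin (2 * n))),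
      F (fun i => v (σ i)) = F v)
    (hF : ∀ η : H, F (fun _ => η) = lam * (B η η) ^ n)
    (η ξ : H) (hiso : B η η = 0) :
    F (fun i => if (i : ℕ) < n then η else ξ) =
      lam * ((2 : ℝ) ^ n * (n.factorial : ℝ) ^ 2 / ((2 * n).factorial : ℝ)) * (B η ξ) ^ n ∧
    (lam ≠ 0 → B η ξ ≠ 0 → F (fun i => if (i : ℕ) < n then η else ξ) ≠ 0) := by
  classical
  set a := B η ξ with ha
  set d := B ξ ξ with hd
  set c : ℕ → ℝ := fun k => F (fun i => if (i : ℕ) < k then η else ξ) with hc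
  have hfiltcard : ∀ k : ℕ, k ≤ 2 * n →
      (Finset.univ.filter (fun i : Fin (2 * n) => (i : ℕ) < k)).card = k := by
    intro k hk
    have : Finset.univ.filter (fun i : Fin (2 * n) => (i : ℕ) < k) =
        (Finset.range k).attachFin (fun m hm => lt_of_lt_of_le (Finset.mem_range.mp hm) hk) := by
      ext i; simp [Finset.mem_attachFin]
    rw [this, Finset.card_attachFin, Finset.card_range]
  have hsym : ∀ s : Finset (Fin (2 * n)),
      F (s.piecewise (fun _ => η) (fun _ => ξ)) = c s.card := by
    intro s
    have hcard : s.card ≤ 2 * n := by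
      simpa using Finset.card_le_univ s
    obtain ⟨σ, hσ⟩ := exists_perm_mem_iff (s := s)
      (t := Finset.univ.filter (fun i : Fin (2 * n) => (i : ℕ) < s.card))
      (by rw [hfiltcard s.card hcard])
    have := hFsymm (s.piecewise (fun _ => η) (fun _ => ξ)) σ
    rw [← this]
    congr 1
    funext i
    by_cases hi : (i : ℕ) < s.card
    · have : σ i ∈ s := (hσ i).mpr (by simp [hi])
      simp [Finset.piecewise_eq_of_mem _ _ _ this, hi]
    · have : σ i ∉ s := fun h => hi (by simpa using (hσ i).mp h)
      simp [Finset.piecewise_eq_of_notMem _ _ _ this, hi]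
  have hexpand : ∀ t : ℝ,
      ∑ k ∈ Finset.range (2 * n + 1), ((2 * n).choose k : ℝ) * c k * t ^ k =
        lam * (2 * a * t + d) ^ n := by
    intro t
    have hB : B (t • η + ξ) (t • η + ξ) = 2 * a * t + d := by
      simp [map_add, map_smul, smul_eq_mul, hiso, ← ha, ← hd, hBsymm ξ η]
      ring
    have hL : F (fun _ => t • η + ξ) = ∑ s : Finset (Fin (2 * n)),
        t ^ s.card * c s.card := by
      have := F.map_add_univ (fun _ => t • η) (fun _ => ξ)
      rw [show (fun _ : Fin (2*n) => t • η + ξ) =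
        ((fun _ => t • η) + (fun _ => ξ)) from rfl, this]
      refine Finset.sum_congr rfl fun s _ => ?_
      have hps : s.piecewise (fun _ => t • η) (fun _ => ξ) =
          s.piecewise (fun i => t • (s.piecewise (fun _ => η) (fun _ => ξ)) i)
            (s.piecewise (fun _ => η) (fun _ => ξ)) := by
        funext i
        by_cases hi : i ∈ s <;>
          simp [Finset.piecewise_eq_of_mem _ _ _, Finset.piecewise_eq_of_notMem _ _ _, hi]
      rw [hps, F.map_piecewise_smul, hsym s, Finset.prod_const, smul_eq_mul]
    have hR : F (fun _ => t • η + ξ) = lam * (2 * a * t + d) ^ n := by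
      rw [hF (t • η + ξ), hB]
    rw [← hR, hL, ← Finset.powerset_univ, Finset.sum_powerset,
      Finset.card_univ, Fintype.card_fin]
    refine Finset.sum_congr rfl fun k hk => ?_
    rw [Finset.sum_congr rfl (fun s hs => by
      rw [(Finset.mem_powersetCard.mp hs).2]), Finset.sum_const,
      Finset.card_powersetCard, Finset.card_univ, Fintype.card_fin, nsmul_eq_mul]
    ring
  have hpq : (∑ k ∈ Finset.range (2 * n + 1),
      Polynomial.C (((2 * n).choose k : ℝ) * c k) * Polynomial.X ^ k) =
      Polynomial.C lam * (Polynomial.C (2 * a) * Polynomial.X + Polynomial.C d) ^ n := by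
    apply Polynomial.funext
    intro t
    simp only [Polynomial.eval_finset_sum, Polynomial.eval_mul, Polynomial.eval_pow,
      Polynomial.eval_C, Polynomial.eval_X, Polynomial.eval_add]
    exact hexpand t
  have hcoeff := congrArg (fun p => Polynomial.coeff p n) hpq
  have hL : (∑ k ∈ Finset.range (2 * n + 1),
      Polynomial.C (((2 * n).choose k : ℝ) * c k) * Polynomial.X ^ k).coeff n =
      ((2 * n).choose n : ℝ) * c n := by
    rw [Polynomial.finset_sum_coeff]
    rw [Finset.sum_eq_single n]
    · rw [Polynomial.coeff_C_mul, Polynomial.coeff_X_pow]; simp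
    · intro k _ hkn
      rw [Polynomial.coeff_C_mul, Polynomial.coeff_X_pow]
      simp [Ne.symm hkn]
    · intro h
      exact absurd (Finset.mem_range.mpr (by omega)) h
  have hR : (Polynomial.C lam * (Polynomial.C (2 * a) * Polynomial.X +
      Polynomial.C d) ^ n).coeff n = lam * (2 * a) ^ n := by
    rw [Polynomial.coeff_C_mul, add_pow, Polynomial.finset_sum_coeff]
    rw [Finset.sum_eq_single n]
    · rw [mul_pow, ← Polynomial.C_pow, ← Polynomial.C_pow, ← Polynomial.C_eq_natCast,
        Polynomial.coeff_mul_C, Polynomial.coeff_mul_C, Polynomial.coeff_C_mul,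
        Polynomial.coeff_X_pow]
      simp
    · intro k _ hkn
      rw [mul_pow, ← Polynomial.C_pow, ← Polynomial.C_pow, ← Polynomial.C_eq_natCast,
        Polynomial.coeff_mul_C, Polynomial.coeff_mul_C, Polynomial.coeff_C_mul,
        Polynomial.coeff_X_pow]
      simp [Ne.symm hkn]
    · intro h
      exact absurd (Finset.mem_range.mpr (by omega)) h
  rw [hL, hR] at hcoeff
  have hfac : ((2 * n).choose n : ℝ) * (n.factorial : ℝ) * (n.factorial : ℝ) =
      ((2 * n).factorial : ℝ) := by
    have := Nat.choose_mul_factorial_mul_factorial (show n ≤ 2 * n by omega)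
    have h2 : 2 * n - n = n := by omega
    rw [h2] at this
    exact_mod_cast this
  have hfne : ((2 * n).factorial : ℝ) ≠ 0 := Nat.cast_ne_zero.mpr (Nat.factorial_ne_zero _)
  have hnfne : (n.factorial : ℝ) ≠ 0 := Nat.cast_ne_zero.mpr (Nat.factorial_ne_zero _)
  have hch : ((2 * n).choose n : ℝ) =
      ((2 * n).factorial : ℝ) / ((n.factorial : ℝ) * (n.factorial : ℝ)) := by
    rw [eq_div_iff (mul_ne_zero hnfne hnfne)]
    linarith [hfac]
  have key : c n = lam * ((2 : ℝ) ^ n * (n.factorial : ℝ) ^ 2 / ((2 * n).factorial : ℝ)) * a ^ n := by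
    have h1 : ((2 * n).factorial : ℝ) / ((n.factorial : ℝ) * (n.factorial : ℝ)) * c n =
        lam * (2 ^ n * a ^ n) := by
      rw [← hch, ← mul_pow]; exact hcoeff
    field_simp at h1 ⊢
    linear_combination h1
  constructor
  · exact key
  · intro hlam hane
    rw [show F (fun i => if (i : ℕ) < n then η else ξ) = c n from rfl, key]
    apply mul_ne_zero
    apply mul_ne_zero hlam
    · apply div_ne_zero
      · positivity
      · exact hfne
    · exact pow_ne_zero _ hane
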